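/- arXiv:1703.04265 — 2 statements merged into one kernel-verified Lean document; each statement's English description precedes it below -/
import Mathlib

section
/- Let E be a finite-dimensional real inner product space, let A* : E → ℝ be a convex differentiable function with gradient map Λ := ∇A*, let η ∈ E, let (g_t)_{t≥1} be vectors in E and (β_t)_{t≥1} positive reals. Suppose (μ_t)_{t≥1} in E satisfies Λ(μ_1) = η and, for every t ≥ 1, μ_{t+1} is a global maximizer over E of μ ↦ ⟨μ, g_t + η − Λ(μ_t)⟩ − (1/β_t) B_{A*}(μ‖μ_t). Define λ̃_0 := 0 and λ̃_t := (1 − β_t) λ̃_{t−1} + β_t g_t for t ≥ 1. Then Λ(μ_{t+1}) = λ̃_t + η for every t ≥ 1. -/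
open RealInnerProductSpace

/-- Theorem 1 of the paper in natural-parameter coordinates:
if each `μ_{t+1}` is a global maximizer of the mirror-descent objective
`μ ↦ ⟨μ, g_t + η − Λ(μ_t)⟩ − (1/β_t) B_{A*}(μ‖μ_t)`, then
`Λ(μ_{t+1}) = λ̃_t + η` where `λ̃_t` follows the convex-combination recursion. -/
theorem cvi_mirror_steps_natural_params
    {E : Type*} [NormedAddCommGroup E] [InnerProductSpace ℝ E]
    [FiniteDimensional ℝ E]
    (Astar : E → ℝ) (hconv : ConvexOn ℝ Set.univ Astar)
    (Λ : E → E) (hgrad : ∀ x, HasGradientAt Astar (Λ x) x)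
    (η : E) (g : ℕ → E) (β : ℕ → ℝ) (hβ : ∀ t, 1 ≤ t → 0 < β t)
    (μ : ℕ → E) (hμ1 : Λ (μ 1) = η)
    (hmax : ∀ t, 1 ≤ t →
      IsMaxOn (fun m => ⟪m, g t + η - Λ (μ t)⟫ -
          (1 / β t) * (Astar m - Astar (μ t) - ⟪m - μ t, Λ (μ t)⟫))
        Set.univ (μ (t + 1)))
    (lamTilde : ℕ → E) (h0 : lamTilde 0 = 0)
    (hTildeRec : ∀ t, 1 ≤ t →
      lamTilde t = (1 - β t) • lamTilde (t - 1) + (β t) • g t) :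
    ∀ t, 1 ≤ t → Λ (μ (t + 1)) = lamTilde t + η := by
  -- Key one-step identity from the first-order optimality condition.
  have key : ∀ t, 1 ≤ t →
      Λ (μ (t + 1)) = Λ (μ t) + β t • (g t + η - Λ (μ t)) := by
    intro t ht
    set c := g t + η - Λ (μ t) with hc
    set b := β t with hbdef
    have hb : b ≠ 0 := (hβ t ht).ne'
    set x := μ (t + 1) with hx
    set y := μ t with hy
    -- the objective, rewritten
    have hfun : (fun m => ⟪m, c⟫ - (1 / b) * (Astar m - Astar y - ⟪m - y, Λ y⟫))
        = (fun m => ⟪c, m⟫ - (1 / b) * Astar m + (1 / b) * ⟪Λ y, m⟫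
            + ((1 / b) * Astar y - (1 / b) * ⟪y, Λ y⟫)) := by
      funext m
      rw [inner_sub_left, real_inner_comm m c, real_inner_comm m (Λ y)]
      ring
    have hF : HasFDerivAt
        (fun m => ⟪m, c⟫ - (1 / b) * (Astar m - Astar y - ⟪m - y, Λ y⟫))
        ((innerSL ℝ c - (1 / b) • (InnerProductSpace.toDual ℝ E (Λ x) : E →L[ℝ] ℝ)
          + (1 / b) • innerSL ℝ (Λ y))) x := by
      rw [hfun]
      have h1 : HasFDerivAt (fun m : E => ⟪c, m⟫) (innerSL ℝ c) x :=
        (innerSL ℝ c).hasFDerivAt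
      have h2 : HasFDerivAt (fun m : E => (1 / b) * Astar m)
          ((1 / b) • (InnerProductSpace.toDual ℝ E (Λ x) : E →L[ℝ] ℝ)) x :=
        ((hgrad x).hasFDerivAt).const_mul (1 / b)
      have h3 : HasFDerivAt (fun m : E => (1 / b) * ⟪Λ y, m⟫)
          ((1 / b) • innerSL ℝ (Λ y)) x :=
        ((innerSL ℝ (Λ y)).hasFDerivAt).const_mul (1 / b)
      exact ((h1.sub h2).add h3).add_const _
    have hloc : IsLocalMax
        (fun m => ⟪m, c⟫ - (1 / b) * (Astar m - Astar y - ⟪m - y, Λ y⟫)) x :=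
      (hmax t ht).isLocalMax (by simp)
    have hzero := hloc.hasFDerivAt_eq_zero hF
    -- evaluate the zero functional at arbitrary vectors
    have hev : ∀ v : E, ⟪c, v⟫ - (1 / b) * ⟪Λ x, v⟫ + (1 / b) * ⟪Λ y, v⟫ = 0 := by
      intro v
      have := congrArg (fun (F : E →L[ℝ] ℝ) => F v) hzero
      simpa [ContinuousLinearMap.sub_apply, ContinuousLinearMap.add_apply,
        ContinuousLinearMap.smul_apply, InnerProductSpace.toDual_apply_apply,
        innerSL_apply_apply] using this
    refine ext_inner_right ℝ (fun v => ?_)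
    have h := hev v
    rw [inner_add_left, real_inner_smul_left]
    have hc' : ⟪c, v⟫ = ⟪Λ x, v⟫ * (1 / b) - ⟪Λ y, v⟫ * (1 / b) := by
      field_simp at h ⊢
      linarith
    have hbb : b * (1 / b) = 1 := by field_simp
    linear_combination (-b) * hc' - (⟪Λ x, v⟫ - ⟪Λ y, v⟫) * hbb
  intro t ht
  induction t, ht using Nat.le_induction with
  | base =>
    have hk := key 1 le_rfl
    have hr := hTildeRec 1 le_rfl
    rw [hμ1] at hk
    simp at hr
    rw [h0] at hr
    rw [hk, hr]
    module
  | succ n hn ih =>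
    have hk := key (n + 1) (by omega)
    have hr := hTildeRec (n + 1) (by omega)
    simp only [Nat.add_sub_cancel] at hr
    rw [ih] at hk
    rw [hk, hr]
    module
end

section
/- Let (Z, 𝒜, ν) be a σ-finite measure space with ν ≠ 0, let d ≥ 1, and let φ : Z → ℝ^d be measurable. For λ ∈ ℝ^d define Z(λ) := ∫ exp⟨φ(z), λ⟩ dν(z), and when Z(λ) < ∞ set A(λ) := log Z(λ) and q_λ(z) := exp(⟨φ(z), λ⟩ − A(λ)). Fix η, g ∈ ℝ^d, β ∈ (0, 1], and λ_t ∈ ℝ^d with 0 < Z(λ_t) < ∞; define ξ := β (g + η) + (1 − β) λ_t and assume 0 < Z(ξ) < ∞. Then for every λ ∈ ℝ^d such that 0 < Z(λ) < ∞ and z ↦ ‖φ(z)‖ exp⟨φ(z), λ⟩ is ν-integrable, writing μ(λ) := ∫ φ(z) q_λ(z) dν(z), one has β ⟨μ(λ), g⟩ + β ∫ q_λ(z)(⟨φ(z), η⟩ − log q_λ(z)) dν(z) − (1 − β) ∫ q_λ(z)(log q_λ(z) − log q_{λ_t}(z)) dν(z) ≤ A(ξ) − (1 − β) A(λ_t),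 with equality when λ = ξ. -/
open MeasureTheory RealInnerProductSpace

/-- The partition function `Z(λ) = ∫ exp⟨φ(z), λ⟩ dν(z)`. -/
noncomputable def partZ {Z : Type*} [MeasurableSpace Z] (ν : Measure Z) {d : ℕ}
    (φ : Z → EuclideanSpace ℝ (Fin d)) (l : EuclideanSpace ℝ (Fin d)) : ℝ :=
  ∫ z, Real.exp ⟪φ z, l⟫ ∂ν

/-- The log-partition function `A(λ) = log Z(λ)`. -/
noncomputable def logPart {Z : Type*} [MeasurableSpace Z] (ν : Measure Z) {d : ℕ}
    (φ : Z → EuclideanSpace ℝ (Fin d)) (l : EuclideanSpace ℝ (Fin d)) : ℝ :=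
  Real.log (partZ ν φ l)

/-- The exponential-family density `q_λ(z) = exp(⟨φ(z), λ⟩ − A(λ))`. -/
noncomputable def expDens {Z : Type*} [MeasurableSpace Z] (ν : Measure Z) {d : ℕ}
    (φ : Z → EuclideanSpace ℝ (Fin d)) (l : EuclideanSpace ℝ (Fin d)) (z : Z) : ℝ :=
  Real.exp (⟪φ z, l⟫ - logPart ν φ l)

section Aux
variable {Z : Type*} [MeasurableSpace Z] {ν : Measure Z} {d : ℕ}
  {φ : Z → EuclideanSpace ℝ (Fin d)}

lemma expDens_eq (l : EuclideanSpace ℝ (Fin d)) (z : Z) :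
    expDens ν φ l z = Real.exp ⟪φ z, l⟫ / Real.exp (logPart ν φ l) := by
  rw [expDens, Real.exp_sub]

lemma expDens_nonneg (l : EuclideanSpace ℝ (Fin d)) (z : Z) : 0 ≤ expDens ν φ l z :=
  (Real.exp_pos _).le

lemma integrable_expDens {l : EuclideanSpace ℝ (Fin d)}
    (hInt : Integrable (fun z => Real.exp ⟪φ z, l⟫) ν) :
    Integrable (expDens ν φ l) ν := by
  have h : expDens ν φ l = fun z => Real.exp ⟪φ z, l⟫ / Real.exp (logPart ν φ l) :=
    funext (expDens_eq l)
  rw [h]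
  exact hInt.div_const _

lemma integral_expDens {l : EuclideanSpace ℝ (Fin d)}
    (hInt : Integrable (fun z => Real.exp ⟪φ z, l⟫) ν) (hpos : 0 < partZ ν φ l) :
    ∫ z, expDens ν φ l z ∂ν = 1 := by
  simp only [expDens_eq]
  rw [integral_div, logPart, Real.exp_log hpos, ← partZ]
  field_simp

lemma integrable_expDens_norm {l : EuclideanSpace ℝ (Fin d)}
    (hIntφ : Integrable (fun z => ‖φ z‖ * Real.exp ⟪φ z, l⟫) ν) :
    Integrable (fun z => expDens ν φ l z * ‖φ z‖) ν := by
  have : (fun z => expDens ν φ l z * ‖φ z‖)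
      = fun z => (Real.exp (logPart ν φ l))⁻¹ * (‖φ z‖ * Real.exp ⟪φ z, l⟫) := by
    funext z; rw [expDens_eq]; ring
  rw [this]
  exact hIntφ.const_mul _

lemma measurable_expDens (hφ : Measurable φ) (l : EuclideanSpace ℝ (Fin d)) :
    Measurable (expDens ν φ l) := by
  apply Measurable.exp
  exact (hφ.inner measurable_const).sub measurable_const

lemma integrable_expDens_inner (hφ : Measurable φ) {l : EuclideanSpace ℝ (Fin d)}
    (hIntφ : Integrable (fun z => ‖φ z‖ * Real.exp ⟪φ z, l⟫) ν)
    (c : EuclideanSpace ℝ (Fin d)) :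
    Integrable (fun z => expDens ν φ l z * ⟪φ z, c⟫) ν := by
  apply Integrable.mono' ((integrable_expDens_norm hIntφ).const_mul ‖c‖)
  · exact (((measurable_expDens hφ l).mul (hφ.inner measurable_const)).aestronglyMeasurable)
  · filter_upwards with z
    rw [Real.norm_eq_abs, abs_mul, abs_of_nonneg (expDens_nonneg l z)]
    rw [mul_comm ‖c‖ _, mul_assoc]
    apply mul_le_mul_of_nonneg_left _ (expDens_nonneg l z)
    calc |⟪φ z, c⟫| ≤ ‖φ z‖ * ‖c‖ := abs_real_inner_le_norm _ _


lemma integral_dens_inner_le (hφ : Measurable φ)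
    {lam ξ : EuclideanSpace ℝ (Fin d)}
    (hIntl : Integrable (fun z => Real.exp ⟪φ z, lam⟫) ν) (hposl : 0 < partZ ν φ lam)
    (hIntφ : Integrable (fun z => ‖φ z‖ * Real.exp ⟪φ z, lam⟫) ν)
    (hIntξ : Integrable (fun z => Real.exp ⟪φ z, ξ⟫) ν) (hposξ : 0 < partZ ν φ ξ) :
    ∫ z, expDens ν φ lam z * ⟪φ z, ξ - lam⟫ ∂ν ≤ logPart ν φ ξ - logPart ν φ lam := by
  set c := logPart ν φ ξ - logPart ν φ lam with hc
  have hkey : ∀ z, expDens ν φ lam z * Real.exp (⟪φ z, ξ - lam⟫ - c) = expDens ν φ ξ z := by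
    intro z
    rw [expDens, expDens, ← Real.exp_add, inner_sub_right, hc]
    ring_nf
  have hIqξ : Integrable (expDens ν φ ξ) ν := integrable_expDens hIntξ
  have hIq : Integrable (expDens ν φ lam) ν := integrable_expDens hIntl
  have hIf : Integrable (fun z => expDens ν φ lam z * ⟪φ z, ξ - lam⟫) ν :=
    integrable_expDens_inner hφ hIntφ _
  have hrhsInt : Integrable (fun z => expDens ν φ ξ z + (c - 1) * expDens ν φ lam z) ν :=
    hIqξ.add (hIq.const_mul _)
  have hmono : ∀ z, expDens ν φ lam z * ⟪φ z, ξ - lam⟫ ≤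
      expDens ν φ ξ z + (c - 1) * expDens ν φ lam z := by
    intro z
    rw [← hkey z]
    have h1 : ⟪φ z, ξ - lam⟫ ≤ Real.exp (⟪φ z, ξ - lam⟫ - c) + (c - 1) := by
      have := Real.add_one_le_exp (⟪φ z, ξ - lam⟫ - c)
      linarith
    nlinarith [expDens_nonneg (ν := ν) (φ := φ) lam z,
      mul_le_mul_of_nonneg_left h1 (expDens_nonneg (ν := ν) (φ := φ) lam z)]
  calc ∫ z, expDens ν φ lam z * ⟪φ z, ξ - lam⟫ ∂ν
      ≤ ∫ z, (expDens ν φ ξ z + (c - 1) * expDens ν φ lam z) ∂ν :=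
        integral_mono hIf hrhsInt hmono
    _ = (∫ z, expDens ν φ ξ z ∂ν) + (c - 1) * ∫ z, expDens ν φ lam z ∂ν := by
        rw [integral_add hIqξ (hIq.const_mul _), integral_const_mul]
    _ = c := by rw [integral_expDens hIntξ hposξ, integral_expDens hIntl hposl]; ring

lemma log_expDens (l : EuclideanSpace ℝ (Fin d)) (z : Z) :
    Real.log (expDens ν φ l z) = ⟪φ z, l⟫ - logPart ν φ l := by
  rw [expDens, Real.log_exp]

lemma lhs_eq (hφ : Measurable φ)
    (η g : EuclideanSpace ℝ (Fin d)) (β : ℝ)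
    {lamt : EuclideanSpace ℝ (Fin d)}
    (ξ : EuclideanSpace ℝ (Fin d)) (hξ : ξ = β • (g + η) + (1 - β) • lamt)
    {lam : EuclideanSpace ℝ (Fin d)}
    (hIntl : Integrable (fun z => Real.exp ⟪φ z, lam⟫) ν) (hposl : 0 < partZ ν φ lam)
    (hIntφ : Integrable (fun z => ‖φ z‖ * Real.exp ⟪φ z, lam⟫) ν) :
    β * ⟪∫ z, expDens ν φ lam z • φ z ∂ν, g⟫ +
      β * (∫ z, expDens ν φ lam z *
          (⟪φ z, η⟫ - Real.log (expDens ν φ lam z)) ∂ν) -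
      (1 - β) * (∫ z, expDens ν φ lam z *
          (Real.log (expDens ν φ lam z) - Real.log (expDens ν φ lamt z)) ∂ν) =
    (∫ z, expDens ν φ lam z * ⟪φ z, ξ - lam⟫ ∂ν)
      + logPart ν φ lam - (1 - β) * logPart ν φ lamt := by
  set q := expDens ν φ lam with hqdef
  have hIq : Integrable q ν := integrable_expDens hIntl
  have hIqn : Integrable (fun z => q z * ‖φ z‖) ν := integrable_expDens_norm hIntφ
  have hI : ∀ c : EuclideanSpace ℝ (Fin d), Integrable (fun z => q z * ⟪φ z, c⟫) ν :=
    fun c => integrable_expDens_inner hφ hIntφ c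
  have hnorm : ∫ z, q z ∂ν = 1 := integral_expDens hIntl hposl
  set Al := logPart ν φ lam
  set At := logPart ν φ lamt
  -- step 1: the mean inner product
  have hIsmul : Integrable (fun z => q z • φ z) ν := by
    apply Integrable.mono' hIqn
    · exact ((measurable_expDens hφ lam).aestronglyMeasurable.smul hφ.aestronglyMeasurable)
    · filter_upwards with z
      rw [norm_smul, Real.norm_eq_abs, abs_of_nonneg (expDens_nonneg lam z)]
  have e1 : ⟪∫ z, q z • φ z ∂ν, g⟫ = ∫ z, q z * ⟪φ z, g⟫ ∂ν := by
    rw [real_inner_comm, ← integral_inner hIsmul g]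
    congr 1; funext z
    rw [real_inner_smul_right, real_inner_comm]
  -- step 2
  have e2 : ∫ z, q z * (⟪φ z, η⟫ - Real.log (q z)) ∂ν
      = (∫ z, q z * ⟪φ z, η⟫ ∂ν) - (∫ z, q z * ⟪φ z, lam⟫ ∂ν) + Al := by
    have hpt : ∀ z, q z * (⟪φ z, η⟫ - Real.log (q z))
        = (q z * ⟪φ z, η⟫ - q z * ⟪φ z, lam⟫) + Al * q z := by
      intro z; rw [hqdef, log_expDens]; ring
    have ha : Integrable (fun z => q z * ⟪φ z, η⟫ - q z * ⟪φ z, lam⟫) ν := (hI η).sub (hI lam)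
    have hb : Integrable (fun z => Al * q z) ν := hIq.const_mul _
    rw [integral_congr_ae (Filter.Eventually.of_forall hpt),
      integral_add ha hb, integral_sub (hI η) (hI lam), integral_const_mul, hnorm]
    ring
  -- step 3
  have e3 : ∫ z, q z * (Real.log (q z) - Real.log (expDens ν φ lamt z)) ∂ν
      = (∫ z, q z * ⟪φ z, lam⟫ ∂ν) - (∫ z, q z * ⟪φ z, lamt⟫ ∂ν) - Al + At := by
    have hpt : ∀ z, q z * (Real.log (q z) - Real.log (expDens ν φ lamt z))
        = (q z * ⟪φ z, lam⟫ - q z * ⟪φ z, lamt⟫) + (At - Al) * q z := by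
      intro z; rw [hqdef, log_expDens, log_expDens]; ring
    have ha : Integrable (fun z => q z * ⟪φ z, lam⟫ - q z * ⟪φ z, lamt⟫) ν := (hI lam).sub (hI lamt)
    have hb : Integrable (fun z => (At - Al) * q z) ν := hIq.const_mul _
    rw [integral_congr_ae (Filter.Eventually.of_forall hpt),
      integral_add ha hb, integral_sub (hI lam) (hI lamt), integral_const_mul, hnorm]
    ring
  -- step 4
  have e4 : ∫ z, q z * ⟪φ z, ξ - lam⟫ ∂ν
      = β * (∫ z, q z * ⟪φ z, g⟫ ∂ν) + β * (∫ z, q z * ⟪φ z, η⟫ ∂ν)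
        + (1 - β) * (∫ z, q z * ⟪φ z, lamt⟫ ∂ν) - (∫ z, q z * ⟪φ z, lam⟫ ∂ν) := by
    have hpt : ∀ z, q z * ⟪φ z, ξ - lam⟫
        = (β * (q z * ⟪φ z, g⟫) + β * (q z * ⟪φ z, η⟫))
          + ((1 - β) * (q z * ⟪φ z, lamt⟫) - q z * ⟪φ z, lam⟫) := by
      intro z
      rw [hξ, inner_sub_right, inner_add_right, real_inner_smul_right,
        real_inner_smul_right, inner_add_right]
      ring
    have ha : Integrable (fun z => β * (q z * ⟪φ z, g⟫) + β * (q z * ⟪φ z, η⟫)) ν :=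
      ((hI g).const_mul β).add ((hI η).const_mul β)
    have hb : Integrable (fun z => (1 - β) * (q z * ⟪φ z, lamt⟫) - q z * ⟪φ z, lam⟫) ν :=
      ((hI lamt).const_mul (1 - β)).sub (hI lam)
    have hc : Integrable (fun z => β * (q z * ⟪φ z, g⟫)) ν := (hI g).const_mul β
    have hd' : Integrable (fun z => β * (q z * ⟪φ z, η⟫)) ν := (hI η).const_mul β
    have he : Integrable (fun z => (1 - β) * (q z * ⟪φ z, lamt⟫)) ν := (hI lamt).const_mul (1 - β)
    rw [integral_congr_ae (Filter.Eventually.of_forall hpt),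
      integral_add ha hb, integral_add hc hd', integral_sub he (hI lam),
      integral_const_mul, integral_const_mul, integral_const_mul]
    ring
  rw [e1, e2, e3, e4]
  ring

end Aux

/-- Lemma 3: the (β-scaled) mirror-descent objective is maximized
over the exponential family exactly at `ξ = β(g + η) + (1 − β)λ_t`. -/
theorem mirror_step_objective_max
    {Z : Type*} [MeasurableSpace Z] (ν : Measure Z) [SigmaFinite ν] (hν : ν ≠ 0)
    (d : ℕ) (hd : 1 ≤ d)
    (φ : Z → EuclideanSpace ℝ (Fin d)) (hφ : Measurable φ)
    (η g : EuclideanSpace ℝ (Fin d)) (β : ℝ) (hβ0 : 0 < β) (hβ1 : β ≤ 1)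
    (lamt : EuclideanSpace ℝ (Fin d))
    (hIntT : Integrable (fun z => Real.exp ⟪φ z, lamt⟫) ν)
    (hposT : 0 < partZ ν φ lamt)
    (ξ : EuclideanSpace ℝ (Fin d)) (hξ : ξ = β • (g + η) + (1 - β) • lamt)
    (hIntξ : Integrable (fun z => Real.exp ⟪φ z, ξ⟫) ν)
    (hposξ : 0 < partZ ν φ ξ) :
    (∀ lam : EuclideanSpace ℝ (Fin d),
        Integrable (fun z => Real.exp ⟪φ z, lam⟫) ν →
        0 < partZ ν φ lam →
        Integrable (fun z => ‖φ z‖ * Real.exp ⟪φ z, lam⟫) ν →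
        β * ⟪∫ z, expDens ν φ lam z • φ z ∂ν, g⟫ +
          β * (∫ z, expDens ν φ lam z *
              (⟪φ z, η⟫ - Real.log (expDens ν φ lam z)) ∂ν) -
          (1 - β) * (∫ z, expDens ν φ lam z *
              (Real.log (expDens ν φ lam z) - Real.log (expDens ν φ lamt z)) ∂ν) ≤
        logPart ν φ ξ - (1 - β) * logPart ν φ lamt) ∧
    (Integrable (fun z => ‖φ z‖ * Real.exp ⟪φ z, ξ⟫) ν →
        β * ⟪∫ z, expDens ν φ ξ z • φ z ∂ν, g⟫ +
          β * (∫ z, expDens ν φ ξ z *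
              (⟪φ z, η⟫ - Real.log (expDens ν φ ξ z)) ∂ν) -
          (1 - β) * (∫ z, expDens ν φ ξ z *
              (Real.log (expDens ν φ ξ z) - Real.log (expDens ν φ lamt z)) ∂ν) =
        logPart ν φ ξ - (1 - β) * logPart ν φ lamt) := by
  constructor
  · intro lam hIntl hposl hIntφl
    rw [lhs_eq hφ η g β ξ hξ hIntl hposl hIntφl]
    have h := integral_dens_inner_le hφ hIntl hposl hIntφl hIntξ hposξ
    linarith
  · intro hIntφξ
    rw [lhs_eq hφ η g β ξ hξ hIntξ hposξ hIntφξ]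
    have h0 : ∫ z, expDens ν φ ξ z * ⟪φ z, ξ - ξ⟫ ∂ν = 0 := by simp
    rw [h0]; ring
end
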